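/- Let H be a non-negative non-decreasing càdlàg infinitely divisible process with H_0 = 0, Lévy measure ν on the space M of non-zero non-negative non-decreasing càdlàg functions vanishing at 0, and zero drift, so that E[exp(−Σ_{i=1}^d a_i H_{t_i})] = exp(−∫_M (1 − exp(−Σ_{i=1}^d a_i g(t_i))) dν(g)). Then the sequence X := 1 / (inf{t : H_t ≥ E_i})_{i∈ℕ} with (E_i) i.i.d. Exp(1) independent of H satisfies, for all d and all x ∈ (0,∞)^d: P(X_1 < x_1, ..., X_d < x_d) = exp(−∫_M (1 − Π_{i=1}^d exp(−g(1/x_i))) dν(g)), i.e. its exponent measure is μ(A) = ∫_M P_{⊗(1−exp(−g(·)))}(1/A) dν(g). -/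

import Mathlib

open MeasureTheory ProbabilityTheory
open scoped ENNReal

/-- Deterministic equivalence: for a nonneg monotone right-continuous path `h` with `h 0 = 0`,
and `e > 0`, `x > 0`, we have `(sInf {s | 0 ≤ s ∧ e ≤ h s})⁻¹ < x ↔ h x⁻¹ < e`. -/
lemma stmt12_aux {h : ℝ → ℝ} (h0 : h 0 = 0) (hmono : Monotone h)
    (hrc : ∀ s, ContinuousWithinAt h (Set.Ici s) s) {e x : ℝ} (he : 0 < e) (hx : 0 < x) :
    (sInf {s | 0 ≤ s ∧ e ≤ h s})⁻¹ < x ↔ h x⁻¹ < e := by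
  set S : Set ℝ := {s | 0 ≤ s ∧ e ≤ h s} with hSdef
  by_cases hS : S.Nonempty
  · have hbdd : BddBelow S := ⟨0, fun s hs => hs.1⟩
    set Y := sInf S with hYdef
    have hY0 : 0 ≤ Y := le_csInf hS fun s hs => hs.1
    have hYmem : e ≤ h Y := by
      by_contra hc
      push_neg at hc
      have hev : ∀ᶠ s in nhdsWithin Y (Set.Ici Y), h s < e :=
        (hrc Y) (Iio_mem_nhds hc)
      obtain ⟨u, hu, hsub⟩ :=
        ((nhdsGE_basis_of_exists_gt ⟨Y + 1, lt_add_one Y⟩).eventually_iff).1 hev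
      set m := (Y + u) / 2 with hm
      have hm1 : Y < m := by simp only [hm]; linarith
      have hm2 : m < u := by simp only [hm]; linarith
      have hlb : ∀ s ∈ S, m < s := by
        intro s hs
        by_contra hns
        push_neg at hns
        have hsY : Y ≤ s := csInf_le hbdd hs
        have := hsub ⟨hsY, lt_of_le_of_lt hns hm2⟩
        exact absurd hs.2 (not_le.2 this)
      have : m ≤ Y := le_csInf hS fun s hs => (hlb s hs).le
      linarith
    have hYpos : 0 < Y := by
      rcases hY0.lt_or_eq with hlt | heq
      · exact hlt
      · exfalso; rw [← heq, h0] at hYmem; linarith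
    constructor
    · intro hlt
      have hxY : x⁻¹ < Y := by
        rw [inv_lt_comm₀ hYpos hx] at hlt
        exact hlt
      have hns : x⁻¹ ∉ S := fun hmem => absurd (csInf_le hbdd hmem) (not_le.2 hxY)
      have : ¬ (0 ≤ x⁻¹ ∧ e ≤ h x⁻¹) := hns
      push_neg at this
      exact this (inv_pos.2 hx).le
    · intro hlt
      have hxY : x⁻¹ < Y := by
        rcases lt_or_ge x⁻¹ Y with h' | h'
        · exact h'
        · exfalso
          have : e ≤ h x⁻¹ := le_trans hYmem (hmono h')
          linarith
      rw [inv_lt_comm₀ hYpos hx]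
      exact hxY
  · have hSempty : S = ∅ := Set.not_nonempty_iff_eq_empty.1 hS
    have hR : h x⁻¹ < e := by
      by_contra hc
      push_neg at hc
      have : x⁻¹ ∈ S := ⟨(inv_pos.2 hx).le, hc⟩
      rw [hSempty] at this
      exact this
    have hL : (sInf S)⁻¹ < x := by
      rw [hSempty, Real.sInf_empty, inv_zero]
      exact hx
    exact ⟨fun _ => hR, fun _ => hL⟩

theorem stmt12 {Ω : Type*} [MeasurableSpace Ω] (P : Measure Ω)
    [IsProbabilityMeasure P] (H : Ω → ℝ → ℝ) (hHmeas : Measurable H)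
    (hH0 : ∀ ω, H ω 0 = 0) (hHmono : ∀ ω, Monotone (H ω))
    (hHnn : ∀ ω t, 0 ≤ t → 0 ≤ H ω t)
    (hHrc : ∀ ω t, ContinuousWithinAt (H ω) (Set.Ici t) t)
    -- the Lévy measure ν on the space M of non-zero nnnd paths vanishing at 0
    (ν : Measure (ℝ → ℝ))
    (hνsupp : ν {g | ¬ (g 0 = 0 ∧ Monotone g ∧ (∀ t, 0 ≤ g t) ∧ g ≠ 0)} = 0)
    (hνint : ∀ t : ℝ, 0 ≤ t →
      (∫⁻ g, ENNReal.ofReal (min 1 (g t)) ∂ν) < ⊤)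
    -- H is infinitely divisible with Lévy measure ν and zero drift
    (hLaplace : ∀ (n : ℕ) (a t : Fin n → ℝ), (∀ i, 0 ≤ a i) → (∀ i, 0 ≤ t i) →
      ∫⁻ ω, ENNReal.ofReal (Real.exp (-(∑ i, a i * H ω (t i)))) ∂P =
        ENNReal.ofReal (Real.exp
          (-(∫⁻ g, ENNReal.ofReal
              (1 - Real.exp (-(∑ i, a i * g (t i)))) ∂ν).toReal)))
    (E : ℕ → Ω → ℝ) (hEmeas : ∀ i, Measurable (E i))
    (hEindep : iIndepFun E P)
    (hEexp : ∀ (i : ℕ) (t : ℝ),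
      P {ω | t < E i ω} = ENNReal.ofReal (Real.exp (-(max t 0))))
    (hEH : IndepFun (fun ω (i : ℕ) => E i ω) H P)
    (Y X : ℕ → Ω → ℝ)
    (hY : ∀ i ω, Y i ω = sInf {t | 0 ≤ t ∧ E i ω ≤ H ω t})
    (hX : ∀ i ω, X i ω = (Y i ω)⁻¹) :
    ∀ (d : ℕ) (x : Fin d → ℝ), (∀ i, 0 < x i) →
      P {ω | ∀ i : Fin d, X i ω < x i} =
        ENNReal.ofReal (Real.exp
          (-(∫⁻ g, ENNReal.ofReal
              (1 - ∏ i : Fin d, Real.exp (-g (1 / x i))) ∂ν).toReal)) := by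
  intro d x hx
  -- the (extended to ℕ) evaluation times
  set t' : ℕ → ℝ := fun j => if hj : j < d then (x ⟨j, hj⟩)⁻¹ else 0 with ht'def
  have ht'nn : ∀ j, 0 ≤ t' j := by
    intro j
    simp only [ht'def]
    split
    · exact (inv_pos.2 (hx _)).le
    · exact le_refl 0
  have ht' : ∀ i : Fin d, t' (i : ℕ) = (x i)⁻¹ := by
    intro i
    simp [ht'def, i.isLt]
  -- Step 1 : almost sure positivity of the exponential variables
  have hEpos : ∀ᵐ ω ∂P, ∀ i : Fin d, 0 < E (i : ℕ) ω := by
    rw [ae_all_iff]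
    intro i
    have hone : P {ω | 0 < E (i : ℕ) ω} = 1 := by
      rw [hEexp (i : ℕ) 0]
      simp
    have hms : MeasurableSet {ω | 0 < E (i : ℕ) ω} :=
      measurableSet_lt measurable_const (hEmeas _)
    have := prob_compl_eq_zero_iff hms |>.2 hone
    filter_upwards [measure_eq_zero_iff_ae_notMem.1 this] with ω hω
    simpa using hω
  -- Step 2 : rewrite the event
  have hevent : {ω | ∀ i : Fin d, X (i : ℕ) ω < x i}
      =ᵐ[P] {ω | ∀ i : Fin d, H ω (t' (i : ℕ)) < E (i : ℕ) ω} := by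
    filter_upwards [hEpos] with ω hω
    simp only [Set.mem_setOf_eq, eq_iff_iff]
    refine forall_congr' fun i => ?_
    rw [hX, hY, ht' i]
    exact stmt12_aux (hH0 ω) (hHmono ω) (hHrc ω) (hω i) (hx i)
  rw [measure_congr hevent]
  -- Step 3 : independence of (E_i) from H
  set Es : Ω → (ℕ → ℝ) := fun ω i => E i ω with hEsdef
  have hEsm : Measurable Es := measurable_pi_lambda _ hEmeas
  haveI : IsProbabilityMeasure (P.map Es) := Measure.isProbabilityMeasure_map hEsm.aemeasurable
  haveI : IsProbabilityMeasure (P.map H) := Measure.isProbabilityMeasure_map hHmeas.aemeasurable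
  have hmap : P.map (fun ω => (Es ω, H ω)) = (P.map Es).prod (P.map H) :=
    (indepFun_iff_map_prod_eq_prod_map_map hEsm.aemeasurable hHmeas.aemeasurable).1 hEH
  set S2 : Set ((ℕ → ℝ) × (ℝ → ℝ)) := {p | ∀ i : Fin d, p.2 (t' (i : ℕ)) < p.1 (i : ℕ)}
    with hS2def
  have hS2 : MeasurableSet S2 := by
    rw [hS2def, Set.setOf_forall]
    exact MeasurableSet.iInter fun i =>
      measurableSet_lt (measurable_snd.eval) (measurable_fst.eval)
  have h1 : P {ω | ∀ i : Fin d, H ω (t' (i : ℕ)) < E (i : ℕ) ω}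
      = ((P.map Es).prod (P.map H)) S2 := by
    rw [← hmap, Measure.map_apply (hEsm.prodMk hHmeas) hS2]
    rfl
  rw [h1, Measure.prod_apply_symm hS2]
  -- Step 4 : the inner measure
  have hinner : ∀ g : ℝ → ℝ,
      (P.map Es) ((fun e => (e, g)) ⁻¹' S2)
        = ∏ i : Fin d, ENNReal.ofReal (Real.exp (-(max (g (t' (i : ℕ))) 0))) := by
    intro g
    have hpre : (fun e : ℕ → ℝ => (e, g)) ⁻¹' S2
        = ⋂ j ∈ Finset.range d, (fun e : ℕ → ℝ => e j) ⁻¹' Set.Ioi (g (t' j)) := by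
      ext e
      simp only [hS2def, Set.mem_preimage, Set.mem_setOf_eq, Set.mem_iInter,
        Finset.mem_range, Set.mem_Ioi, Fin.forall_iff]
    have hmeasInter : MeasurableSet
        (⋂ j ∈ Finset.range d, (fun e : ℕ → ℝ => e j) ⁻¹' Set.Ioi (g (t' j))) := by
      refine MeasurableSet.biInter (Set.to_countable _) fun j _ =>
        (measurable_pi_apply j) measurableSet_Ioi
    rw [hpre, Measure.map_apply hEsm hmeasInter]
    have hpre2 : Es ⁻¹' (⋂ j ∈ Finset.range d, (fun e : ℕ → ℝ => e j) ⁻¹' Set.Ioi (g (t' j)))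
        = ⋂ j ∈ Finset.range d, E j ⁻¹' Set.Ioi (g (t' j)) := by
      ext ω
      simp [hEsdef]
    rw [hpre2]
    have hfact := hEindep.measure_inter_preimage_eq_mul (Finset.range d)
      (sets := fun j => Set.Ioi (g (t' j))) (fun j _ => measurableSet_Ioi)
    rw [hfact]
    have hfac : ∀ j ∈ Finset.range d, P (E j ⁻¹' Set.Ioi (g (t' j)))
        = ENNReal.ofReal (Real.exp (-(max (g (t' j)) 0))) := by
      intro j _
      have : E j ⁻¹' Set.Ioi (g (t' j)) = {ω | g (t' j) < E j ω} := rfl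
      rw [this, hEexp]
    rw [Finset.prod_congr rfl hfac]
    exact (Fin.prod_univ_eq_prod_range
      (fun j => ENNReal.ofReal (Real.exp (-(max (g (t' j)) 0)))) d).symm
  rw [lintegral_congr hinner]
  -- Step 5 : pull the integral back to Ω
  have hmeasprod : Measurable fun g : ℝ → ℝ =>
      ∏ i : Fin d, ENNReal.ofReal (Real.exp (-(max (g (t' (i : ℕ))) 0))) := by
    refine Finset.measurable_prod _ fun i _ => ?_
    exact ENNReal.measurable_ofReal.comp
      ((Real.continuous_exp.measurable).comp
        ((((measurable_pi_apply (t' (i : ℕ)))).max measurable_const).neg))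
  rw [lintegral_map hmeasprod hHmeas]
  -- Step 6 : apply the Laplace transform hypothesis
  have hptwise : ∀ ω,
      (∏ i : Fin d, ENNReal.ofReal (Real.exp (-(max (H ω (t' (i : ℕ))) 0))))
        = ENNReal.ofReal (Real.exp (-(∑ i : Fin d, (fun _ : Fin d => (1 : ℝ)) i *
            H ω ((fun i : Fin d => t' (i : ℕ)) i)))) := by
    intro ω
    have hmax : ∀ i : Fin d, max (H ω (t' (i : ℕ))) 0 = H ω (t' (i : ℕ)) := fun i =>
      max_eq_left (hHnn ω _ (ht'nn _))
    simp only [hmax, one_mul]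
    rw [← ENNReal.ofReal_prod_of_nonneg (fun i _ => (Real.exp_pos _).le),
      ← Real.exp_sum]
    congr 1
    rw [← Finset.sum_neg_distrib]
  rw [lintegral_congr hptwise,
    hLaplace d (fun _ => (1 : ℝ)) (fun i : Fin d => t' (i : ℕ))
      (fun _ => zero_le_one) (fun i => ht'nn _)]
  -- Step 7 : identify the two ν-integrals
  have hνeq : (∫⁻ g, ENNReal.ofReal
        (1 - Real.exp (-(∑ i : Fin d, (fun _ : Fin d => (1:ℝ)) i *
          g ((fun i : Fin d => t' (i : ℕ)) i)))) ∂ν)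
      = ∫⁻ g, ENNReal.ofReal (1 - ∏ i : Fin d, Real.exp (-g (1 / x i))) ∂ν := by
    refine lintegral_congr fun g => ?_
    have hsum : (∑ i : Fin d, (1:ℝ) * g (t' (i : ℕ))) = ∑ i : Fin d, g (1 / x i) :=
      Finset.sum_congr rfl fun i _ => by rw [one_mul, ht' i, one_div]
    rw [hsum, ← Finset.sum_neg_distrib, Real.exp_sum]
  rw [hνeq]
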